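/- The functions a(t) = 3/|t-t0|, b(t) = 30/|t-t0|^3, c(t) = 120/|t-t0|^5 satisfy the BKL constraint (ln a)'(ln b)' + (ln a)'(ln c)' + (ln b)'(ln c)' = a² + b/a + c/b for all t ≠ t0. -/

import Mathlib

lemma bkl_aux_deriv (t0 t : ℝ) (ht : t ≠ t0) (k : ℝ) (hk : 0 < k) (n : ℕ) :
    deriv (fun s => Real.log (k / |s - t0| ^ n)) t = -(n : ℝ) / (t - t0) := by
  have h : (fun s => Real.log (k / |s - t0| ^ n)) =ᶠ[nhds t]
      (fun s => Real.log k - n * Real.log (s - t0)) := by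
    filter_upwards [isOpen_compl_singleton.mem_nhds (by simpa using ht)] with s hs
    have hs' : s - t0 ≠ 0 := sub_ne_zero.mpr hs
    rw [Real.log_div (ne_of_gt hk) (pow_ne_zero _ (abs_ne_zero.mpr hs')), Real.log_pow,
      Real.log_abs]
  rw [h.deriv_eq]
  have h1 : HasDerivAt (fun s : ℝ => Real.log (s - t0)) (1 / (t - t0)) t := by
    have := (Real.hasDerivAt_log (sub_ne_zero.mpr ht)).comp t
      ((hasDerivAt_id t).sub_const t0)
    simpa [Function.comp_def] using this
  have h2 : HasDerivAt (fun s => Real.log k - n * Real.log (s - t0))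
      (-((n : ℝ) * (1 / (t - t0)))) t := (h1.const_mul (n : ℝ)).const_sub (Real.log k)
  rw [h2.deriv]; ring

/-- The exact BKL solution satisfies the BKL constraint
`(ln a)'(ln b)' + (ln a)'(ln c)' + (ln b)'(ln c)' = a² + b/a + c/b` for all `t ≠ t0`. -/
theorem bkl_exact_solution_constraint (t0 : ℝ)
    (a b c : ℝ → ℝ)
    (ha : ∀ t, a t = 3 / |t - t0|)
    (hb : ∀ t, b t = 30 / |t - t0| ^ 3)
    (hc : ∀ t, c t = 120 / |t - t0| ^ 5) :
    ∀ t ≠ t0,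
      deriv (fun s => Real.log (a s)) t * deriv (fun s => Real.log (b s)) t +
      deriv (fun s => Real.log (a s)) t * deriv (fun s => Real.log (c s)) t +
      deriv (fun s => Real.log (b s)) t * deriv (fun s => Real.log (c s)) t =
      (a t) ^ 2 + b t / a t + c t / b t := by
  intro t ht
  have hd : t - t0 ≠ 0 := sub_ne_zero.mpr ht
  have hu : |t - t0| ≠ 0 := abs_ne_zero.mpr hd
  have ea : (fun s => Real.log (a s)) = fun s => Real.log (3 / |s - t0| ^ 1) := by
    funext s; rw [ha, pow_one]
  have eb : (fun s => Real.log (b s)) = fun s => Real.log (30 / |s - t0| ^ 3) := by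
    funext s; rw [hb]
  have ec : (fun s => Real.log (c s)) = fun s => Real.log (120 / |s - t0| ^ 5) := by
    funext s; rw [hc]
  rw [ea, eb, ec, bkl_aux_deriv t0 t ht 3 (by norm_num) 1,
    bkl_aux_deriv t0 t ht 30 (by norm_num) 3, bkl_aux_deriv t0 t ht 120 (by norm_num) 5,
    ha, hb, hc]
  have h2 : (t - t0) ^ 2 = |t - t0| ^ 2 := (sq_abs _).symm
  field_simp
  linear_combination (-2070) * h2
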